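/- Let V be a real inner product space, v_1,...,v_n vectors in V with ⟨v_i,v_i⟩ = 2, and fix an index k. Define v_i' = -v_i if i = k, v_i' = v_i - ⟨v_i, v_k⟩ v_k if i ∈ S (for an arbitrary subset S not containing k), and v_i' = v_i otherwise. Then the Gram matrix of (v_1',...,v_n') defines the same quadratic form as the Gram matrix of (v_1,...,v_n); in particular the two Gram matrices have the same rank and the same positive semi-definiteness. -/

import Mathlib

open scoped RealInnerProductSpace

lemma mutation_sum_ite_coeff {M : Type*} [AddCommGroup M] [Module ℝ M] {n : ℕ}
    (k i : Fin n) (S : Finset (Fin n)) (c : Fin n → ℝ) (f : Fin n → M) :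
    ∑ m, (if i = k then (if m = k then (-1:ℝ) else 0)
      else if i ∈ S then ((if m = i then (1:ℝ) else 0) - c i * (if m = k then 1 else 0))
      else (if m = i then (1:ℝ) else 0)) • f m
    = if i = k then -f k else if i ∈ S then f i - c i • f k else f i := by
  by_cases hik : i = k
  · simp [hik, ite_smul, Finset.sum_ite_eq']
  · by_cases hiS : i ∈ S
    · simp [hik, hiS, sub_smul, ite_smul, mul_smul, Finset.sum_sub_distrib,
        Finset.sum_ite_eq']
    · simp [hik, hiS, ite_smul, Finset.sum_ite_eq']

theorem mutation_preserves_quadratic_form {E : Type*} [NormedAddCommGroup E]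
    [InnerProductSpace ℝ E] {n : ℕ} (v : Fin n → E) (hnorm : ∀ i, ⟪v i, v i⟫ = 2)
    (k : Fin n) (S : Finset (Fin n)) (hkS : k ∉ S)
    (v' : Fin n → E)
    (hv' : ∀ i, v' i = if i = k then -v i
      else if i ∈ S then v i - ⟪v i, v k⟫ • v k else v i)
    (G G' : Matrix (Fin n) (Fin n) ℝ)
    (hG : ∀ i j, G i j = ⟪v i, v j⟫) (hG' : ∀ i j, G' i j = ⟪v' i, v' j⟫) :
    (∃ P : Matrix (Fin n) (Fin n) ℝ, IsUnit P.det ∧ G' = P.transpose * G * P) ∧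
      G'.rank = G.rank ∧ (G.PosSemidef ↔ G'.PosSemidef) := by
  classical
  set c : Fin n → ℝ := fun i => ⟪v i, v k⟫ with hc
  set P : Matrix (Fin n) (Fin n) ℝ := Matrix.of fun m i =>
    if i = k then (if m = k then (-1 : ℝ) else 0)
    else if i ∈ S then ((if m = i then (1:ℝ) else 0) - c i * (if m = k then 1 else 0))
    else (if m = i then (1:ℝ) else 0) with hP
  have hPapp : ∀ m i, P m i = if i = k then (if m = k then (-1 : ℝ) else 0)
      else if i ∈ S then ((if m = i then (1:ℝ) else 0) - c i * (if m = k then 1 else 0))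
      else (if m = i then (1:ℝ) else 0) := fun m i => rfl
  -- v' i is the linear combination of v with coefficients the i-th column of P
  have hvP : ∀ i, v' i = ∑ m, P m i • v m := by
    intro i
    rw [hv' i]
    simp_rw [hPapp]
    rw [mutation_sum_ite_coeff k i S c v]
    split_ifs with h1 h2 <;> simp [h1, hc]
  -- column sums against P
  have hsum : ∀ (a b : Fin n), ∑ m, P a m * P m b =
      if b = k then -P a k else if b ∈ S then P a b - c b * P a k else P a b := by
    intro a b
    have := mutation_sum_ite_coeff (M := ℝ) k b S c (fun m => P a m)
    simp only [smul_eq_mul] at this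
    rw [← this]
    refine Finset.sum_congr rfl fun m _ => ?_
    rw [mul_comm, hPapp m b]
  -- P is an involution
  have hPP : P * P = 1 := by
    ext a b
    rw [Matrix.mul_apply, hsum a b]
    by_cases hbk : b = k
    · rw [if_pos hbk, hPapp a k, if_pos rfl, Matrix.one_apply]
      by_cases hak : a = k <;> simp [hak, hbk]
    · rw [if_neg hbk]
      by_cases hbS : b ∈ S
      · rw [if_pos hbS, hPapp a b, hPapp a k, if_pos rfl, if_neg hbk, if_pos hbS,
          Matrix.one_apply]
        split_ifs <;> ring
      · rw [if_neg hbS, hPapp a b, if_neg hbk, if_neg hbS, Matrix.one_apply]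
  have hPdet : IsUnit P.det := by
    have : P.det * P.det = 1 := by rw [← Matrix.det_mul, hPP, Matrix.det_one]
    exact IsUnit.of_mul_eq_one _ this
  have hGG' : G' = P.transpose * G * P := by
    ext i j
    rw [hG' i j, hvP i, hvP j, sum_inner]
    simp_rw [inner_sum, real_inner_smul_left, real_inner_smul_right]
    rw [Matrix.mul_apply]
    simp_rw [Matrix.mul_apply, Matrix.transpose_apply, hG, Finset.sum_mul]
    rw [Finset.sum_comm]
    refine Finset.sum_congr rfl fun l _ => Finset.sum_congr rfl fun m _ => ?_
    ring
  refine ⟨⟨P, hPdet, hGG'⟩, ?_, ?_⟩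
  · rw [hGG', Matrix.rank_mul_eq_left_of_isUnit_det _ _ hPdet,
      Matrix.rank_mul_eq_right_of_isUnit_det _ _ (by rwa [Matrix.det_transpose])]
  · constructor
    · intro h
      rw [hGG']
      simpa using h.conjTranspose_mul_mul_same P
    · intro h
      have hPPt : P.transpose * P.transpose = 1 := by
        rw [← Matrix.transpose_mul, hPP, Matrix.transpose_one]
      have hG2 : G = P.transpose * G' * P := by
        rw [hGG']
        calc G = 1 * G * 1 := by simp
          _ = (P.transpose * P.transpose) * G * (P * P) := by rw [hPPt, hPP]
          _ = P.transpose * (P.transpose * G * P) * P := by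
              simp only [Matrix.mul_assoc]
      rw [hG2]
      simpa using h.conjTranspose_mul_mul_same P
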